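/- Let E be a finite-dimensional real inner product space, let φ : (Fin d → ℝ) → E be differentiable at ξ, let f : (Fin d → ℝ) → (Fin d → ℝ) be differentiable at θ with f θ = ξ and with fderiv ℝ f θ a bijective linear map, let ψ = φ ∘ f, and let L : E → ℝ be differentiable at p = φ ξ. Define ∂ i = fderiv ℝ φ ξ (Pi.single i 1), the Gram matrix G of the family ∂, and (∇_ξ L) i = fderiv ℝ (L ∘ φ) ξ (Pi.single i 1); analogously define ∂' j = fderiv ℝ ψ θ (Pi.single j 1), the Gram matrix G' of the family ∂', and (∇_θ L) j = fderiv ℝ (L ∘ ψ) θ (Pi.single j 1). Then for any generalized inverse B of G and any generalized inverse B' of G' one has ∑ j, (B'.mulVec (∇_θ L)) j • ∂' j = ∑ i, (B.mulVec (∇_ξ L)) i • ∂ i. -/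

import Mathlib

open scoped RealInnerProductSpace

section Aux
variable {d : ℕ} {E : Type*} [NormedAddCommGroup E] [InnerProductSpace ℝ E]
  [FiniteDimensional ℝ E]

lemma NPG_repr (T : (Fin d → ℝ) →ₗ[ℝ] E) (y : Fin d → ℝ) :
    T y = ∑ i, y i • T (Pi.single i 1) := by
  have hy : y = ∑ i, y i • (Pi.single i 1 : Fin d → ℝ) := by
    funext j
    simp [Finset.sum_apply, Pi.single_apply]
  conv_lhs => rw [hy]
  simp

lemma NPG_key (T : (Fin d → ℝ) →ₗ[ℝ] E) (w : E) (G B : Matrix (Fin d) (Fin d) ℝ)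
    (hG : ∀ i j, G i j = ⟪T (Pi.single i 1), T (Pi.single j 1)⟫)
    (hB : G * B * G = G) (n : Fin d → ℝ)
    (hn : ∀ i, n i = ⟪w, T (Pi.single i 1)⟫) :
    ∑ i, (B.mulVec n) i • T (Pi.single i 1)
      = (Submodule.orthogonalProjection (LinearMap.range T) w : E) := by
  have hGv : ∀ (y : Fin d → ℝ) (i : Fin d),
      G.mulVec y i = ⟪T (Pi.single i 1), T y⟫ := by
    intro y i
    rw [NPG_repr T y, inner_sum]
    simp only [real_inner_smul_right]
    simp [Matrix.mulVec, dotProduct, hG, mul_comm]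
  have hker : ∀ z, G.mulVec z = 0 → T z = 0 := by
    intro z hz
    have h0 : ⟪T z, T z⟫ = 0 := by
      nth_rewrite 1 [NPG_repr T z]
      rw [sum_inner]
      simp only [real_inner_smul_left]
      have : ∀ i, ⟪T (Pi.single i 1), T z⟫ = 0 := by
        intro i; rw [← hGv z i, hz]; rfl
      simp [this]
    exact inner_self_eq_zero.mp h0
  obtain ⟨x, hx⟩ : ((Submodule.orthogonalProjection (LinearMap.range T) w : E)) ∈ LinearMap.range T :=
    (Submodule.orthogonalProjection (LinearMap.range T) w).2
  have hnx : n = G.mulVec x := by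
    funext i
    have hmem : T (Pi.single i 1) ∈ LinearMap.range T := LinearMap.mem_range_self T _
    have horth : ⟪T (Pi.single i 1), w - (Submodule.orthogonalProjection (LinearMap.range T) w : E)⟫ = 0 :=
      (Submodule.mem_orthogonal _ _).mp
        (Submodule.sub_starProjection_mem_orthogonal (K := LinearMap.range T) w) _ hmem
    rw [inner_sub_right, sub_eq_zero] at horth
    rw [hn i, hGv x i, hx, real_inner_comm, horth]
  have hBGx : T ((B * G).mulVec x) = T x := by
    have hz : G.mulVec ((B * G).mulVec x - x) = 0 := by
      have : G.mulVec ((B * G).mulVec x) = G.mulVec x := by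
        rw [Matrix.mulVec_mulVec, ← mul_assoc, hB]
      rw [Matrix.mulVec_sub, this, sub_self]
    have := hker _ hz
    rw [map_sub, sub_eq_zero] at this
    exact this
  calc ∑ i, (B.mulVec n) i • T (Pi.single i 1) = T (B.mulVec n) := (NPG_repr T _).symm
    _ = T ((B * G).mulVec x) := by rw [hnx, Matrix.mulVec_mulVec]
    _ = T x := hBGx
    _ = _ := hx

end Aux

lemma NPG_proj_congr {E : Type*} [NormedAddCommGroup E] [InnerProductSpace ℝ E]
    (S₁ S₂ : Submodule ℝ E) [CompleteSpace S₁] [CompleteSpace S₂]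
    (h : S₁ = S₂) (w : E) :
    (Submodule.orthogonalProjection S₁ w : E) = Submodule.orthogonalProjection S₂ w := by
  subst h; rfl


theorem natural_parameter_gradient_reparametrisation_invariant_on_model
    {d : ℕ} {E : Type*} [NormedAddCommGroup E] [InnerProductSpace ℝ E]
    [FiniteDimensional ℝ E]
    (φ : (Fin d → ℝ) → E) (f : (Fin d → ℝ) → (Fin d → ℝ))
    (ξ θ : Fin d → ℝ) (hfθ : f θ = ξ)
    (hφ : DifferentiableAt ℝ φ ξ) (hf : DifferentiableAt ℝ f θ)
    (hbij : Function.Bijective (fderiv ℝ f θ))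
    (ψ : (Fin d → ℝ) → E) (hψ : ψ = φ ∘ f)
    (L : E → ℝ) (p : E) (hp : p = φ ξ) (hL : DifferentiableAt ℝ L p)
    (par : Fin d → E) (hpar : ∀ i, par i = fderiv ℝ φ ξ (Pi.single i 1))
    (G : Matrix (Fin d) (Fin d) ℝ) (hG : ∀ i j, G i j = ⟪par i, par j⟫)
    (nablaξ : Fin d → ℝ) (hnablaξ : ∀ i, nablaξ i = fderiv ℝ (L ∘ φ) ξ (Pi.single i 1))
    (par' : Fin d → E) (hpar' : ∀ j, par' j = fderiv ℝ ψ θ (Pi.single j 1))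
    (G' : Matrix (Fin d) (Fin d) ℝ) (hG' : ∀ i j, G' i j = ⟪par' i, par' j⟫)
    (nablaθ : Fin d → ℝ) (hnablaθ : ∀ j, nablaθ j = fderiv ℝ (L ∘ ψ) θ (Pi.single j 1))
    (B B' : Matrix (Fin d) (Fin d) ℝ)
    (hB : G * B * G = G) (hB' : G' * B' * G' = G') :
    ∑ j, (B'.mulVec nablaθ) j • par' j = ∑ i, (B.mulVec nablaξ) i • par i := by
  have hφθ : DifferentiableAt ℝ φ (f θ) := hfθ ▸ hφ
  have hψdiff : DifferentiableAt ℝ ψ θ := hψ ▸ hφθ.comp θ hf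
  have hψd : fderiv ℝ ψ θ = (fderiv ℝ φ ξ).comp (fderiv ℝ f θ) := by
    rw [hψ, fderiv_comp (x := θ) hφθ hf, hfθ]
  have hψθ : ψ θ = p := by rw [hψ]; simp [hfθ, ← hp]
  have hLφd : fderiv ℝ (L ∘ φ) ξ = (fderiv ℝ L p).comp (fderiv ℝ φ ξ) := by
    rw [fderiv_comp (x := ξ) (hp ▸ hL) hφ, ← hp]
  have hLψd : fderiv ℝ (L ∘ ψ) θ =
      (fderiv ℝ L p).comp ((fderiv ℝ φ ξ).comp (fderiv ℝ f θ)) := by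
    rw [fderiv_comp (x := θ) (hψθ ▸ hL) hψdiff, hψθ, hψd]
  set w : E := (InnerProductSpace.toDual ℝ E).symm (fderiv ℝ L p) with hwdef
  have hw : ∀ y : E, ⟪w, y⟫ = fderiv ℝ L p y := fun y =>
    InnerProductSpace.toDual_symm_apply
  set T₁ : (Fin d → ℝ) →ₗ[ℝ] E := (fderiv ℝ φ ξ : (Fin d → ℝ) →ₗ[ℝ] E) with hT₁
  set T₂ : (Fin d → ℝ) →ₗ[ℝ] E :=
    ((fderiv ℝ φ ξ).comp (fderiv ℝ f θ) : (Fin d → ℝ) →ₗ[ℝ] E) with hT₂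
  have hpar₁ : ∀ i, par i = T₁ (Pi.single i 1) := fun i => hpar i
  have hpar₂ : ∀ j, par' j = T₂ (Pi.single j 1) := fun j => by
    rw [hpar' j, hψd]; rfl
  have e1 := NPG_key T₁ w G B
    (fun i j => by rw [hG i j, hpar₁ i, hpar₁ j]) hB nablaξ
    (fun i => by rw [hnablaξ i, hLφd, ContinuousLinearMap.comp_apply]; exact (hw _).symm)
  have e2 := NPG_key T₂ w G' B'
    (fun i j => by rw [hG' i j, hpar₂ i, hpar₂ j]) hB' nablaθ
    (fun j => by rw [hnablaθ j, hLψd]; simp only [ContinuousLinearMap.comp_apply]; exact (hw _).symm)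
  have hrange : LinearMap.range T₂ = LinearMap.range T₁ := by
    have hc : T₂ = T₁.comp (fderiv ℝ f θ : (Fin d → ℝ) →ₗ[ℝ] (Fin d → ℝ)) := rfl
    have hs : LinearMap.range (fderiv ℝ f θ : (Fin d → ℝ) →ₗ[ℝ] (Fin d → ℝ)) = ⊤ :=
      LinearMap.range_eq_top.mpr hbij.2
    rw [hc, LinearMap.range_comp, hs, Submodule.map_top]
  simp only [hpar₁, hpar₂]
  rw [e1, e2, NPG_proj_congr _ _ hrange w]
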